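/- Let τ be the doubling map on the circle, b ∈ (0,1), and f = 1_{[0,b)} - (b/(1-b)) 1_{[b,1)}. Then the coboundary equation f(t) = g(t) - g(2t) (for almost every t) has no solution g ∈ L^2(𝕋). -/

import Mathlib

open MeasureTheory

/-- The 1-periodic step function equal to `1` on `[0,b)` and `-b/(1-b)` on `[b,1)`. -/
noncomputable def stepf (b : ℝ) : ℝ → ℝ := fun x =>
  if Int.fract x < b then 1 else -b / (1 - b)

open intervalIntegral Real Complex Filter Topology FourierTransform

/-- auxiliary character -/
noncomputable def efn (x : ℝ) : ℂ := Complex.exp (((-2 * Real.pi * x : ℝ) : ℂ) * Complex.I)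

lemma efn_add (x y : ℝ) : efn (x + y) = efn x * efn y := by
  simp only [efn, ← Complex.exp_add]; congr 1; push_cast; ring

lemma efn_int (n : ℤ) : efn n = 1 := by
  simp only [efn]
  have h : ((-2 * Real.pi * (n:ℝ) : ℝ) : ℂ) * Complex.I
      = ((-n : ℤ) : ℂ) * (2 * Real.pi * Complex.I) := by push_cast; ring
  rw [h, Complex.exp_int_mul_two_pi_mul_I]

lemma efn_half : efn (1/2 : ℝ) = -1 := by
  simp only [efn]
  have h : ((-2 * Real.pi * (1/2 : ℝ) : ℝ) : ℂ) * Complex.I = (Real.pi : ℂ) * Complex.I * (-1) := by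
    push_cast; ring
  rw [h]
  rw [mul_neg_one, Complex.exp_neg, Complex.exp_pi_mul_I]; norm_num

lemma efn_cont : Continuous efn := by unfold efn; fun_prop

lemma ofReal_ii (g : ℝ → ℝ) {a b : ℝ} (h : IntervalIntegrable g volume a b) :
    IntervalIntegrable (fun t => ((g t : ℂ))) volume a b := ⟨h.1.ofReal, h.2.ofReal⟩

lemma gmul_ii (g : ℝ → ℝ) {a b : ℝ} (h : IntervalIntegrable g volume a b) (ν : ℝ) :
    IntervalIntegrable (fun t => ((g t : ℂ) * efn (ν * t))) volume a b :=
  (ofReal_ii g h).mul_continuousOn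
    ((efn_cont.comp (continuous_const.mul continuous_id)).continuousOn)

lemma per_ii (g : ℝ → ℝ) (hper : Function.Periodic g 1)
    (hg01 : IntervalIntegrable g volume 0 1) : IntervalIntegrable g volume 1 2 := by
  have := hg01.comp_sub_right 1
  have he : (fun x => g (x - 1)) = g := funext fun x => hper.sub_eq x
  rw [he] at this; norm_num at this; exact this

lemma Jr (g : ℝ → ℝ) (hper : Function.Periodic g 1)
    (hg01 : IntervalIntegrable g volume 0 1) (ν : ℝ) :
    ∫ t in (0:ℝ)..1, ((g (2*t) : ℂ) * efn (ν * t)) =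
      (1 + efn (ν/2)) / 2 * ∫ t in (0:ℝ)..1, ((g t : ℂ) * efn (ν/2 * t)) := by
  set h : ℝ → ℂ := fun u => (g u : ℂ) * efn (ν/2 * u) with hh
  have hg12 : IntervalIntegrable g volume 1 2 := per_ii g hper hg01
  have hint1 : IntervalIntegrable h volume 0 1 := gmul_ii g hg01 _
  have hint2 : IntervalIntegrable h volume 1 2 := gmul_ii g hg12 _
  have step1 : ∫ t in (0:ℝ)..1, ((g (2*t) : ℂ) * efn (ν * t)) = ∫ t in (0:ℝ)..1, h (2*t) := by
    apply intervalIntegral.integral_congr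
    intro t _
    simp only [hh]
    congr 2
    ring
  have step2 : ∫ t in (0:ℝ)..1, h (2*t) = (2:ℝ)⁻¹ • ∫ u in (0:ℝ)..2, h u := by
    rw [intervalIntegral.integral_comp_mul_left h (two_ne_zero)]
    norm_num
  have step3 : ∫ u in (0:ℝ)..2, h u = (∫ u in (0:ℝ)..1, h u) + ∫ u in (1:ℝ)..2, h u :=
    (intervalIntegral.integral_add_adjacent_intervals hint1 hint2).symm
  have step4 : ∫ u in (1:ℝ)..2, h u = ∫ u in (0:ℝ)..1, h (u + 1) := by
    rw [intervalIntegral.integral_comp_add_right h 1]; norm_num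
  have step5 : ∀ u, h (u + 1) = efn (ν/2) * h u := by
    intro u
    simp only [hh, hper u, mul_add, efn_add]
    ring
  have step6 : ∫ u in (0:ℝ)..1, h (u + 1) = efn (ν/2) * ∫ u in (0:ℝ)..1, h u := by
    simp_rw [step5]
    exact intervalIntegral.integral_const_mul _ _
  rw [step1, step2, step3, step4, step6, Complex.real_smul]
  push_cast
  ring

lemma RLstep (g : ℝ → ℝ) (hgi : IntegrableOn g (Set.Ioc 0 1) volume) :
    Tendsto (fun k : ℕ => ∫ t in (0:ℝ)..1, ((g t : ℂ) * efn ((2^k : ℝ) * t))) atTop (𝓝 0) := by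
  set G : ℝ → ℂ := (Set.Ioc (0:ℝ) 1).indicator (fun t => (g t : ℂ)) with hG
  have hGint : Integrable G volume := (integrable_indicator_iff measurableSet_Ioc).mpr hgi.ofReal
  have key : ∀ w : ℝ, 𝓕 G w = ∫ t in (0:ℝ)..1, ((g t : ℂ) * efn (w * t)) := by
    intro w
    rw [Real.fourier_real_eq_integral_exp_smul,
      intervalIntegral.integral_of_le zero_le_one,
      ← MeasureTheory.integral_indicator measurableSet_Ioc]
    congr 1
    funext v
    rw [hG, Set.indicator_apply, Set.indicator_apply]
    by_cases hv : v ∈ Set.Ioc (0:ℝ) 1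
    · simp only [hv, if_pos, smul_eq_mul, efn]
      rw [mul_comm]
      congr 2
      push_cast; ring
    · simp [hv]
  have hcc : Tendsto (fun k : ℕ => ((2:ℝ)^k)) atTop (cocompact ℝ) := by
    refine (tendsto_pow_atTop_atTop_of_one_lt one_lt_two).mono_right ?_
    rw [cocompact_eq_atBot_atTop]; exact le_sup_right
  have := (Real.zero_at_infty_fourier G).comp hcc
  refine this.congr fun k => ?_
  exact key _

lemma div_im_aux (a θ : ℝ) (ha : a ≠ 0) :
    ((Complex.exp ((θ:ℂ) * Complex.I) - 1) / ((a:ℂ) * Complex.I)).im = (1 - Real.cos θ)/a := by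
  rw [Complex.exp_mul_I, Complex.div_im]
  simp [Complex.normSq_apply]
  rw [← Complex.ofReal_cos, Complex.ofReal_re]
  field_simp
  ring

lemma Fval (b : ℝ) (hb : b ∈ Set.Ioo (0:ℝ) 1) (n : ℕ) (hn : 1 ≤ n) :
    ∫ t in (0:ℝ)..1, ((stepf b t : ℂ) * efn ((n:ℝ) * t)) =
      (((1 - b)⁻¹ : ℝ) : ℂ) * ((Complex.exp ((( -(2*Real.pi*n*b) : ℝ):ℂ) * Complex.I) - 1)
        / (((-(2*Real.pi*n) : ℝ):ℂ) * Complex.I)) := by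
  obtain ⟨hb0, hb1⟩ := hb
  have hb1' : (1:ℝ) - b ≠ 0 := by linarith
  have hnpos : (0:ℝ) < n := by exact_mod_cast hn
  set r : ℝ := b / (1 - b) with hr
  set efn' : ℝ → ℂ := fun t => efn ((n:ℝ) * t) with hefn'
  have hefc : Continuous efn' := efn_cont.comp (by fun_prop)
  have hc0 : ((-(2*Real.pi*n) : ℝ):ℂ) * Complex.I ≠ 0 := by
    apply mul_ne_zero _ Complex.I_ne_zero
    rw [ne_eq, Complex.ofReal_eq_zero]
    nlinarith [Real.pi_pos]
  set φ : ℝ → ℂ := fun t => ((1+r : ℝ):ℂ) * (Set.Iio b).indicator efn' t - ((r:ℝ):ℂ) * efn' t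
    with hφ
  have hae1 : ∀ᵐ x : ℝ ∂volume, x ≠ 1 := by
    have hs : {x : ℝ | ¬ x ≠ 1} = {1} := by ext x; simp
    rw [MeasureTheory.ae_iff, hs]; exact Real.volume_singleton
  have step1 : ∫ t in (0:ℝ)..1, ((stepf b t : ℂ) * efn ((n:ℝ) * t))
      = ∫ t in (0:ℝ)..1, φ t := by
    apply intervalIntegral.integral_congr_ae
    filter_upwards [hae1] with t ht htI
    rw [Set.uIoc_of_le zero_le_one] at htI
    have hfr : Int.fract t = t := Int.fract_eq_self.mpr ⟨le_of_lt htI.1, lt_of_le_of_ne htI.2 ht⟩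
    simp only [stepf, hfr, hφ]
    split_ifs with h
    · rw [Set.indicator_of_mem (by exact h : t ∈ Set.Iio b)]
      push_cast
      ring
    · rw [Set.indicator_of_notMem (by exact h : t ∉ Set.Iio b)]
      push_cast [hr]
      ring
  have hEf : IntervalIntegrable efn' volume 0 1 := hefc.intervalIntegrable 0 1
  have hIndOn : IntegrableOn ((Set.Iio b).indicator efn') (Set.Ioc 0 1) volume :=
    (hefc.integrableOn_Ioc).indicator measurableSet_Iio
  have hInd : IntervalIntegrable ((Set.Iio b).indicator efn') volume 0 1 := by
    rw [intervalIntegrable_iff_integrableOn_Ioc_of_le zero_le_one]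
    exact hIndOn
  have step2 : ∫ t in (0:ℝ)..1, φ t
      = ((1+r : ℝ):ℂ) * (∫ t in (0:ℝ)..1, (Set.Iio b).indicator efn' t)
        - ((r:ℝ):ℂ) * ∫ t in (0:ℝ)..1, efn' t := by
    rw [intervalIntegral.integral_sub ((hInd.const_mul _)) ((hEf.const_mul _)),
      intervalIntegral.integral_const_mul, intervalIntegral.integral_const_mul]
  have step3 : ∫ t in (0:ℝ)..1, (Set.Iio b).indicator efn' t = ∫ t in (0:ℝ)..b, efn' t := by
    have hset : Set.Ioc (0:ℝ) 1 ∩ Set.Iio b = Set.Ioo 0 b := by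
      ext x
      simp only [Set.mem_inter_iff, Set.mem_Ioc, Set.mem_Iio, Set.mem_Ioo]
      constructor
      · rintro ⟨⟨h1, _⟩, h3⟩; exact ⟨h1, h3⟩
      · rintro ⟨h1, h2⟩; exact ⟨⟨h1, by linarith⟩, h2⟩
    rw [intervalIntegral.integral_of_le zero_le_one,
      MeasureTheory.setIntegral_indicator measurableSet_Iio, hset,
      ← MeasureTheory.integral_Ioc_eq_integral_Ioo, ← intervalIntegral.integral_of_le hb0.le]
  have hexp : ∀ t : ℝ, efn' t
      = Complex.exp ((((-(2*Real.pi*n)):ℝ):ℂ) * Complex.I * (t:ℝ)) := by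
    intro t
    simp only [hefn', efn]
    congr 1
    push_cast
    ring
  have step4 : ∫ t in (0:ℝ)..b, efn' t
      = (Complex.exp ((( -(2*Real.pi*n*b) : ℝ):ℂ) * Complex.I) - 1)
        / (((-(2*Real.pi*n) : ℝ):ℂ) * Complex.I) := by
    simp_rw [hexp]
    rw [integral_exp_mul_complex hc0]
    congr 2
    · congr 1
      push_cast
      ring
    · norm_num
  have step5 : ∫ t in (0:ℝ)..1, efn' t = 0 := by
    simp_rw [hexp]
    rw [integral_exp_mul_complex hc0]
    have h1 : (((-(2*Real.pi*n)):ℝ):ℂ) * Complex.I * ((1:ℝ):ℂ)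
        = ((-(n:ℤ) : ℤ):ℂ) * (2 * Real.pi * Complex.I) := by push_cast; ring
    rw [h1, Complex.exp_int_mul_two_pi_mul_I]
    norm_num
  rw [step1, step2, step3, step4, step5]
  have hrr : (1 : ℝ) + r = (1-b)⁻¹ := by
    rw [hr]; field_simp; ring
  rw [hrr]
  ring

/-- For the doubling map and `b ∈ (0,1)`, the coboundary equation
`f(t) = g(t) - g(2t)` (a.e. on the circle) has no solution `g ∈ L²(𝕋)`:
there is no 1-periodic `g`, square-integrable on `[0,1)`, solving it a.e. -/
theorem stmt7 (b : ℝ) (hb : b ∈ Set.Ioo (0:ℝ) 1) :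
    ¬ ∃ g : ℝ → ℝ, Function.Periodic g 1 ∧
        MemLp g 2 (volume.restrict (Set.Ico (0:ℝ) 1)) ∧
        ∀ᵐ t ∂(volume.restrict (Set.Ico (0:ℝ) 1)), stepf b t = g t - g (2 * t) := by
  rintro ⟨g, hper, hg2, hae⟩
  obtain ⟨hb0, hb1⟩ := hb
  have hpi := Real.pi_pos
  -- basic integrability
  have hfin : IsFiniteMeasure (volume.restrict (Set.Ico (0:ℝ) 1)) := by
    constructor
    rw [Measure.restrict_apply_univ]
    simp [Real.volume_Ico]
  have hgInt : IntegrableOn g (Set.Ico 0 1) volume := hg2.integrable (by norm_num)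
  have hIcoIoc : volume.restrict (Set.Ico (0:ℝ) 1) = volume.restrict (Set.Ioc (0:ℝ) 1) :=
    Measure.restrict_congr_set MeasureTheory.Ico_ae_eq_Ioc
  have hgIoc : IntegrableOn g (Set.Ioc 0 1) volume := by
    unfold IntegrableOn at hgInt ⊢
    rwa [hIcoIoc] at hgInt
  have hg01 : IntervalIntegrable g volume 0 1 := by
    rw [intervalIntegrable_iff_integrableOn_Ioc_of_le zero_le_one]
    exact hgIoc
  have hg12 : IntervalIntegrable g volume 1 2 := per_ii g hper hg01
  have hgd : IntervalIntegrable (fun t => g (2*t)) volume 0 1 := by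
    have := (hg01.trans hg12).comp_mul_left (c := 2)
    norm_num at this
    exact this
  -- coefficients
  set C : ℕ → ℂ := fun k => ∫ t in (0:ℝ)..1, ((g t : ℂ) * efn ((2^k : ℝ) * t)) with hC
  set F : ℕ → ℂ := fun k => ∫ t in (0:ℝ)..1, ((stepf b t : ℂ) * efn ((2^k : ℝ) * t)) with hF
  -- the coboundary relation at frequency 2^k
  have hae' : ∀ᵐ t ∂(volume.restrict (Set.Ioc (0:ℝ) 1)), stepf b t = g t - g (2 * t) := by
    rwa [hIcoIoc] at hae
  have hae'' : ∀ᵐ t ∂(volume : Measure ℝ), t ∈ Set.Ioc (0:ℝ) 1 → stepf b t = g t - g (2 * t) :=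
    (ae_restrict_iff' measurableSet_Ioc).mp hae'
  have heq : ∀ k : ℕ, F k = C k - ∫ t in (0:ℝ)..1, ((g (2*t) : ℂ) * efn ((2^k : ℝ) * t)) := by
    intro k
    have h1 : F k = ∫ t in (0:ℝ)..1,
        ((g t : ℂ) * efn ((2^k : ℝ) * t) - (g (2*t) : ℂ) * efn ((2^k : ℝ) * t)) := by
      rw [hF]
      apply intervalIntegral.integral_congr_ae
      filter_upwards [hae''] with t ht htI
      rw [Set.uIoc_of_le zero_le_one] at htI
      rw [ht htI]
      push_cast
      ring
    rw [h1, intervalIntegral.integral_sub (gmul_ii g hg01 _) (gmul_ii _ hgd _), hC]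
  -- compute the doubled-argument integrals
  have hJ0 : F 0 = C 0 := by
    have := Jr g hper hg01 1
    rw [heq 0]
    have h2 : ((2:ℝ)^(0:ℕ)) = (1:ℝ) := by norm_num
    rw [h2] at *
    rw [this, efn_half]
    norm_num
  have hJs : ∀ k : ℕ, F (k+1) = C (k+1) - C k := by
    intro k
    have hjr := Jr g hper hg01 ((2:ℝ)^(k+1))
    have hhalf : ((2:ℝ)^(k+1))/2 = (2:ℝ)^k := by
      rw [pow_succ]; field_simp
    rw [hhalf] at hjr
    have hone : efn ((2:ℝ)^k) = 1 := by
      have : ((2:ℝ)^k) = (((2^k : ℤ) : ℝ)) := by push_cast; ring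
      rw [this, efn_int]
    rw [hone] at hjr
    norm_num at hjr
    rw [heq (k+1), hjr, hC]
  -- partial sums
  have hsum : ∀ k : ℕ, C k = ∑ j ∈ Finset.range (k+1), F j := by
    intro k
    induction k with
    | zero => simp [hJ0]
    | succ n ih =>
      rw [Finset.sum_range_succ, ← ih, hJs n]
      ring
  -- Riemann-Lebesgue
  have hRL : Filter.Tendsto C atTop (𝓝 0) := RLstep g hgIoc
  -- imaginary parts
  have hFim : ∀ j : ℕ, (F j).im
      = (1-b)⁻¹ * ((1 - Real.cos (-(2*Real.pi*(2:ℝ)^j*b))) / (-(2*Real.pi*(2:ℝ)^j))) := by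
    intro j
    have hn1 : 1 ≤ 2^j := Nat.one_le_two_pow
    have hval := Fval b ⟨hb0, hb1⟩ (2^j) hn1
    have hcast : (((2^j : ℕ) : ℝ)) = (2:ℝ)^j := by push_cast; ring
    rw [hcast] at hval
    have hFj : F j = (((1 - b)⁻¹ : ℝ) : ℂ)
        * ((Complex.exp ((( -(2*Real.pi*(2:ℝ)^j*b) : ℝ):ℂ) * Complex.I) - 1)
          / (((-(2*Real.pi*(2:ℝ)^j) : ℝ):ℂ) * Complex.I)) := hval
    have ha : -(2*Real.pi*(2:ℝ)^j) ≠ 0 := by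
      have : (0:ℝ) < (2:ℝ)^j := by positivity
      nlinarith
    rw [hFj]
    simp only [Complex.mul_im, Complex.ofReal_re, Complex.ofReal_im, zero_mul, add_zero]
    congr 1
    exact div_im_aux _ _ ha
  have hFim_nonpos : ∀ j : ℕ, (F j).im ≤ 0 := by
    intro j
    rw [hFim j]
    have h1 : (0:ℝ) ≤ (1-b)⁻¹ := by
      apply inv_nonneg.mpr; linarith
    have h2 : (0:ℝ) ≤ 1 - Real.cos (-(2*Real.pi*(2:ℝ)^j*b)) := by
      have := Real.cos_le_one (-(2*Real.pi*(2:ℝ)^j*b)); linarith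
    have h3 : -(2*Real.pi*(2:ℝ)^j) < 0 := by
      have : (0:ℝ) < (2:ℝ)^j := by positivity
      nlinarith
    have := div_nonpos_of_nonneg_of_nonpos h2 h3.le
    exact mul_nonpos_of_nonneg_of_nonpos h1 this
  -- monotone partial sums of -(im) tend to 0
  have hT : Filter.Tendsto (fun k => -(C k).im) atTop (𝓝 0) := by
    have := (Complex.continuous_im.tendsto 0).comp hRL
    simp only [Complex.zero_im] at this
    have h2 := this.neg
    norm_num at h2
    exact h2
  have hTsum : ∀ k, -(C k).im = ∑ j ∈ Finset.range (k+1), (-(F j).im) := by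
    intro k
    rw [hsum k, Complex.im_sum]
    simp
  have hmono : Monotone (fun k => -(C k).im) := by
    intro m n hmn
    simp only [hTsum]
    apply Finset.sum_le_sum_of_subset_of_nonneg
    · exact Finset.range_subset_range.mpr (by omega)
    · intro j _ _
      have := hFim_nonpos j
      linarith
  have hT0 : -(C 0).im ≤ 0 := hmono.ge_of_tendsto hT 0
  have hF0nonneg : 0 ≤ -(F 0).im := by
    have := hFim_nonpos 0; linarith
  have hF0 : (F 0).im = 0 := by
    have h1 : -(C 0).im = -(F 0).im := by rw [hTsum 0]; simp
    rw [h1] at hT0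
    linarith
  -- deduce cos(2πb) = 1, contradiction
  rw [hFim 0] at hF0
  have hb1' : (1-b)⁻¹ ≠ 0 := by
    apply inv_ne_zero; intro h; linarith
  have hden : -(2*Real.pi*(2:ℝ)^(0:ℕ)) ≠ 0 := by
    simp only [pow_zero, mul_one]
    nlinarith
  have hzero : 1 - Real.cos (-(2*Real.pi*(2:ℝ)^(0:ℕ)*b)) = 0 := by
    rcases mul_eq_zero.mp hF0 with h | h
    · exact absurd h hb1'
    · rcases div_eq_zero_iff.mp h with h' | h'
      · exact h'
      · exact absurd h' hden
  have hcos : Real.cos (2*Real.pi*b) = 1 := by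
    simp only [pow_zero, mul_one, Real.cos_neg] at hzero
    linarith
  rw [Real.cos_eq_one_iff] at hcos
  obtain ⟨n, hn⟩ := hcos
  have hbn : b = (n : ℝ) := by
    have : (n:ℝ) * (2 * Real.pi) = 2 * Real.pi * b := by linarith [hn]
    nlinarith
  have h0n : (0:ℝ) < (n:ℝ) := by rw [← hbn]; exact hb0
  have h1n : (n:ℝ) < 1 := by rw [← hbn]; exact hb1
  have : (0:ℤ) < n := by exact_mod_cast h0n
  have : n < (1:ℤ) := by exact_mod_cast h1n
  omega
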